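/- Let q = 2^r with q ≡ 1 (mod 3). The affine cubic curve X²Y + XY² + X² + Y² + XY = 0 has exactly q − 3 points in AG(2,q), i.e., there are exactly q − 3 pairs (x,y) ∈ F_q² satisfying x²y + xy² + x² + y² + xy = 0. -/

import Mathlib

/-- the nodal cubic X²Y + XY² + X² + Y² + XY = 0 has exactly q − 3
affine points over F_q, q = 2^r ≡ 1 (mod 3). -/
theorem stmt3 (r : ℕ) (hr : r ≠ 0) (F : Type) [Field F] [Fintype F] [DecidableEq F]
    (hcard : Fintype.card F = 2 ^ r) (hmod : 2 ^ r % 3 = 1) :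
    (Finset.univ.filter (fun p : F × F =>
        p.1 ^ 2 * p.2 + p.1 * p.2 ^ 2 + p.1 ^ 2 + p.2 ^ 2 + p.1 * p.2 = 0)).card
      = 2 ^ r - 3 := by
  classical
  have hr2 : 2 ≤ r := by
    rcases r with _ | _ | n
    · omega
    · norm_num at hmod
    · omega
  have hq4 : 4 ≤ 2 ^ r := by
    calc (4:ℕ) = 2 ^ 2 := by norm_num
    _ ≤ 2 ^ r := Nat.pow_le_pow_right (by norm_num) hr2
  -- characteristic 2
  have two : (2 : F) = 0 := by
    have hcast : ((2 ^ r : ℕ) : F) = 0 := by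
      have := FiniteField.cast_card_eq_zero F
      rwa [hcard] at this
    have hdvd : ringChar F ∣ 2 ^ r := (ringChar.spec F (2 ^ r)).mp hcast
    have hp := CharP.char_is_prime F (ringChar F)
    have hdvd2 : ringChar F ∣ 2 := hp.dvd_of_dvd_pow hdvd
    have hrc : ringChar F = 2 := (Nat.prime_dvd_prime_iff_eq hp Nat.prime_two).mp hdvd2
    have := (ringChar.spec F 2).mpr (hrc ▸ dvd_refl _)
    exact_mod_cast this
  -- primitive cube root of unity
  have h3dvd : 3 ∣ Fintype.card Fˣ := by
    rw [Fintype.card_units, hcard]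
    omega
  obtain ⟨g, hg⟩ := exists_prime_orderOf_dvd_card 3 h3dvd
  set ω : F := (g : F) with hωdef
  have hω3 : ω ^ 3 = 1 := by
    have : g ^ 3 = 1 := by rw [← hg]; exact pow_orderOf_eq_one g
    have := congrArg (Units.val) this
    simpa using this
  have hω1 : ω ≠ 1 := by
    intro h
    have : g = 1 := Units.ext h
    rw [this, orderOf_one] at hg
    norm_num at hg
  have hωe : ω ^ 2 + ω + 1 = 0 := by
    have hfac : (ω - 1) * (ω ^ 2 + ω + 1) = 0 := by linear_combination hω3
    rcases mul_eq_zero.mp hfac with h | h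
    · exact absurd (by linear_combination h) hω1
    · exact h
  have hω0 : ω ≠ 0 := by
    intro h; rw [h] at hω3; norm_num at hω3
  have hωp0 : ω + 1 ≠ 0 := by
    intro h
    have : ω = 1 := by linear_combination h - two
    exact hω1 this
  have hωp1 : ω + 1 ≠ 1 := by
    intro h; exact hω0 (by linear_combination h)
  have hωω : ω ≠ ω + 1 := by
    intro h; exact (one_ne_zero : (1:F) ≠ 0) (by linear_combination -h)
  -- factorization of t² + t + 1
  have hfact : ∀ t : F, t ^ 2 + t + 1 = (t - ω) * (t - (ω + 1)) := by
    intro t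
    linear_combination (t * ω + t + 1) * two - hωe
  -- the parameter set and parametrization
  set B : Finset F := {0, 1, ω, ω + 1} with hB
  set T : Finset F := Finset.univ \ B with hT
  set f : F → F × F := fun t =>
    ((1 + t + t ^ 2) / (t + t ^ 2), t * ((1 + t + t ^ 2) / (t + t ^ 2))) with hf
  have hmemT : ∀ t : F, t ∈ T ↔ t ≠ 0 ∧ t ≠ 1 ∧ t ≠ ω ∧ t ≠ ω + 1 := by
    intro t
    simp [hT, hB, not_or]
  -- basic nonvanishing for t ∈ T
  have hden : ∀ t : F, t ∈ T → t + t ^ 2 ≠ 0 := by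
    intro t ht
    rw [hmemT] at ht
    obtain ⟨h0, h1, -, -⟩ := ht
    intro h
    have : t * (1 + t) = 0 := by linear_combination h
    rcases mul_eq_zero.mp this with h' | h'
    · exact h0 h'
    · exact h1 (by linear_combination h' - two)
  have hnum : ∀ t : F, t ∈ T → 1 + t + t ^ 2 ≠ 0 := by
    intro t ht
    rw [hmemT] at ht
    obtain ⟨-, -, hω, hω'⟩ := ht
    intro h
    have h' : (t - ω) * (t - (ω + 1)) = 0 := by rw [← hfact]; linear_combination h
    rcases mul_eq_zero.mp h' with h'' | h''
    · exact hω (by linear_combination h'')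
    · exact hω' (by linear_combination h'')
  -- the set equality
  have hset : (Finset.univ.filter (fun p : F × F =>
        p.1 ^ 2 * p.2 + p.1 * p.2 ^ 2 + p.1 ^ 2 + p.2 ^ 2 + p.1 * p.2 = 0))
      = insert ((0 : F), (0 : F)) (T.image f) := by
    ext p
    obtain ⟨x, y⟩ := p
    simp only [Finset.mem_filter, Finset.mem_univ, true_and, Finset.mem_insert,
      Finset.mem_image, Prod.mk.injEq]
    constructor
    · intro hp
      by_cases hx : x = 0
      · left
        subst hx
        have : y ^ 2 = 0 := by linear_combination hp
        exact ⟨rfl, pow_eq_zero_iff (by norm_num) |>.mp this⟩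
      · right
        have hy : y ≠ 0 := by
          intro h
          subst h
          have : x ^ 2 = 0 := by linear_combination hp
          exact hx (pow_eq_zero_iff (by norm_num) |>.mp this)
        set t : F := y / x with htdef
        have hyt : y = t * x := by rw [htdef, div_mul_cancel₀ y hx]
        rw [hyt] at hp
        have hkey : x * (t + t ^ 2) = 1 + t + t ^ 2 := by
          have hx2 : x ^ 2 ≠ 0 := pow_ne_zero 2 hx
          have h' : x ^ 2 * (x * (t + t ^ 2) - (1 + t + t ^ 2)) = 0 := by
            linear_combination hp - (x ^ 2 * (1 + t + t ^ 2)) * two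
          rcases mul_eq_zero.mp h' with h'' | h''
          · exact absurd h'' hx2
          · linear_combination h''
        have ht0 : t ≠ 0 := by
          intro h; rw [h] at hyt; simp at hyt; exact hy hyt
        have ht1 : t ≠ 1 := by
          intro h
          rw [h] at hkey
          have : (1 : F) = 0 := by linear_combination (x - 1) * two - hkey
          exact one_ne_zero this
        have htbad : 1 + t + t ^ 2 ≠ 0 := by
          intro h
          have htt : t + t ^ 2 = 1 := by linear_combination h - two
          rw [htt, mul_one] at hkey
          exact hx (by rw [hkey]; linear_combination h)
        have htT : t ∈ T := by
          rw [hmemT]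
          refine ⟨ht0, ht1, ?_, ?_⟩
          · intro h
            exact htbad (by rw [h]; linear_combination hωe)
          · intro h
            exact htbad (by rw [h]; linear_combination hωe + (ω + 1) * two)
        refine ⟨t, htT, ?_⟩
        have hd : t + t ^ 2 ≠ 0 := hden t htT
        have hx' : (1 + t + t ^ 2) / (t + t ^ 2) = x := by
          rw [div_eq_iff hd]; linear_combination -hkey
        rw [hf]
        simp only [Prod.mk.injEq]
        exact ⟨hx', by rw [hx', ← hyt]⟩
    · rintro (⟨rfl, rfl⟩ | ⟨t, htT, hft⟩)
      · ring
      · have hd := hden t htT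
        have h1 := congrArg Prod.fst hft
        have h2 := congrArg Prod.snd hft
        simp only [hf] at h1 h2
        have hkey : x * (t + t ^ 2) = 1 + t + t ^ 2 := by
          rw [← h1]; exact div_mul_cancel₀ _ hd
        have hy : y = t * x := by rw [← h2, ← h1]
        subst hy
        linear_combination x ^ 2 * hkey + x ^ 2 * (1 + t + t ^ 2) * two
  rw [hset]
  have hnotin : ((0 : F), (0 : F)) ∉ T.image f := by
    simp only [Finset.mem_image, not_exists]
    rintro t ⟨htT, hft⟩
    have := congrArg Prod.fst hft
    simp only [hf] at this
    rcases div_eq_zero_iff.mp this with h | h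
    · exact hnum t htT h
    · exact hden t htT h
  rw [Finset.card_insert_of_notMem hnotin]
  have hinj : Set.InjOn f T := by
    intro t1 h1 t2 h2 heq
    have hx1 : (1 + t1 + t1 ^ 2) / (t1 + t1 ^ 2) ≠ 0 :=
      div_ne_zero (hnum t1 h1) (hden t1 h1)
    have e1 := congrArg Prod.fst heq
    have e2 := congrArg Prod.snd heq
    simp only [hf] at e1 e2
    rw [← e1] at e2
    exact mul_right_cancel₀ hx1 e2
  rw [Finset.card_image_of_injOn hinj]
  have hTcard : T.card = 2 ^ r - 4 := by
    rw [hT, Finset.card_sdiff_of_subset (Finset.subset_univ _), Finset.card_univ, hcard]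
    congr 1
    rw [hB]
    rw [Finset.card_insert_of_notMem (by simp [hω0.symm, hωp0.symm, hωω]),
      Finset.card_insert_of_notMem (by simp [hω1.symm, hωp1.symm]),
      Finset.card_insert_of_notMem (by simp [hωω])]
    simp
  rw [hTcard]
  omega
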